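/- arXiv:1102.1618 — 5 statements merged into one kernel-verified Lean document; each statement's English description precedes it below -/
import Mathlib

section
/- Let F_1,...,F_q ∈ M_n and W ∈ M_{n,k} with W†W = I_k. Suppose W† F_i† F_j W = ξ_{ij} I_k for all 1 ≤ i,j ≤ q, where ξ = [ξ_{ij}] ∈ M_q is positive definite. Let F = [F_1 F_2 ⋯ F_q] ∈ M_{n, qn} and define R_1 = F (I_q ⊗ W)(ξ^{-1/2} ⊗ I_k) ∈ M_{n, qk}. Then R_1† R_1 = I_{qk}; in particular qk ≤ n. -/
open Matrix Kronecker ComplexOrder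

lemma kron_conjTranspose {m n p q : Type*} (A : Matrix m n ℂ) (B : Matrix p q ℂ) :
    (A ⊗ₖ B)ᴴ = Aᴴ ⊗ₖ Bᴴ := by
  ext ⟨i, c⟩ ⟨j, d⟩
  simp [conjTranspose_apply, mul_comm]

/-- If `Wᴴ Fᵢᴴ Fⱼ W = ξᵢⱼ I_k` with `ξ` positive definite, then
`R₁ = F (I_q ⊗ W)(ξ^{-1/2} ⊗ I_k)` satisfies `R₁ᴴ R₁ = I_{qk}`; in particular `qk ≤ n`. -/
theorem R1_isometry (n k q : ℕ)
    (F : Fin q → Matrix (Fin n) (Fin n) ℂ)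
    (W : Matrix (Fin n) (Fin k) ℂ) (hW : Wᴴ * W = 1)
    (ξ : Matrix (Fin q) (Fin q) ℂ) (hξ : ξ.PosDef)
    (hcomp : ∀ i j, Wᴴ * (F i)ᴴ * F j * W = ξ i j • (1 : Matrix (Fin k) (Fin k) ℂ))
    (Fmat : Matrix (Fin n) (Fin q × Fin n) ℂ)
    (hFmat : ∀ (a : Fin n) (p : Fin q × Fin n), Fmat a p = F p.1 a p.2)
    (R₁ : Matrix (Fin n) (Fin q × Fin k) ℂ)
    (hR₁ : R₁ = Fmat * ((1 : Matrix (Fin q) (Fin q) ℂ) ⊗ₖ W) *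
        (((hξ.posSemidef.1.eigenvectorUnitary : Matrix (Fin q) (Fin q) ℂ) * diagonal (((↑) : ℝ → ℂ) ∘ (√·) ∘ hξ.posSemidef.1.eigenvalues) *
          (star hξ.posSemidef.1.eigenvectorUnitary : Matrix (Fin q) (Fin q) ℂ))⁻¹ ⊗ₖ (1 : Matrix (Fin k) (Fin k) ℂ))) :
    R₁ᴴ * R₁ = 1 ∧ q * k ≤ n := by
  set S := ((hξ.posSemidef.1.eigenvectorUnitary : Matrix (Fin q) (Fin q) ℂ) * diagonal (((↑) : ℝ → ℂ) ∘ (√·) ∘ hξ.posSemidef.1.eigenvalues) *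
          (star hξ.posSemidef.1.eigenvectorUnitary : Matrix (Fin q) (Fin q) ℂ)) with hS
  have hSS : S * S = ξ := by
    have hspec := hξ.posSemidef.1.spectral_theorem
    rw [Unitary.conjStarAlgAut_apply] at hspec
    have hU : (star hξ.posSemidef.1.eigenvectorUnitary : Matrix (Fin q) (Fin q) ℂ) *
        (hξ.posSemidef.1.eigenvectorUnitary : Matrix (Fin q) (Fin q) ℂ) = 1 :=
      Unitary.coe_star_mul_self _
    have hD : diagonal (((↑) : ℝ → ℂ) ∘ (√·) ∘ hξ.posSemidef.1.eigenvalues) *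
        diagonal (((↑) : ℝ → ℂ) ∘ (√·) ∘ hξ.posSemidef.1.eigenvalues) =
        diagonal (RCLike.ofReal ∘ hξ.posSemidef.1.eigenvalues) := by
      rw [diagonal_mul_diagonal]
      congr 1
      funext i
      simp only [Function.comp_apply, ← Complex.ofReal_mul]
      rw [Real.mul_self_sqrt (hξ.posSemidef.eigenvalues_nonneg i)]
      rfl
    rw [hS, show ∀ A B C : Matrix (Fin q) (Fin q) ℂ, A * B * C * (A * B * C) = A * (B * (C * A) * B) * C by
      intros; simp only [Matrix.mul_assoc]]
    rw [hU, Matrix.mul_one, hD]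
    exact hspec.symm
  have hSdet : IsUnit S.det := by
    have hdet : S.det * S.det = ξ.det := by rw [← det_mul, hSS]
    have hξdet : ξ.det ≠ 0 := hξ.det_pos.ne'
    exact isUnit_iff_ne_zero.mpr (fun h => hξdet (by rw [← hdet, h, mul_zero]))
  have hSH : Sᴴ = S := by
    rw [hS, conjTranspose_mul, conjTranspose_mul, diagonal_conjTranspose]
    simp only [Matrix.star_eq_conjTranspose, conjTranspose_conjTranspose, Matrix.mul_assoc]
    congr 2
    congr 1
    funext i
    exact Complex.conj_ofReal _
  -- key computation: Mᴴ M = ξ ⊗ₖ 1 for M = Fmat * (1 ⊗ₖ W)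
  set M := Fmat * ((1 : Matrix (Fin q) (Fin q) ℂ) ⊗ₖ W) with hM
  have hMapp : ∀ (a : Fin n) (i : Fin q) (c : Fin k),
      M a (i, c) = ∑ b, F i a b * W b c := by
    intro a i c
    simp only [hM, Matrix.mul_apply, kroneckerMap_apply, Fintype.sum_prod_type, hFmat]
    rw [Finset.sum_comm]
    simp [Matrix.one_apply, Finset.sum_ite_eq', mul_comm, mul_left_comm]
  have hMM : Mᴴ * M = ξ ⊗ₖ (1 : Matrix (Fin k) (Fin k) ℂ) := by
    ext ⟨i, c⟩ ⟨j, d⟩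
    have h := congrFun (congrFun (hcomp i j) c) d
    simp only [Matrix.mul_apply, Matrix.conjTranspose_apply, Matrix.smul_apply, smul_eq_mul] at h
    simp only [Matrix.mul_apply, Matrix.conjTranspose_apply, hMapp, kroneckerMap_apply]
    calc ∑ a, star (∑ b, F i a b * W b c) * ∑ b, F j a b * W b d
        = ∑ a, (∑ b, star (W b c) * star (F i a b)) * ∑ b, F j a b * W b d := by
          simp [star_sum, mul_comm]
      _ = ξ i j * (1 : Matrix (Fin k) (Fin k) ℂ) c d := by
          rw [← h]
          simp only [Finset.sum_mul, Finset.mul_sum]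
          rw [Finset.sum_comm]
          refine Finset.sum_congr rfl fun a _ => ?_
          refine Finset.sum_congr rfl fun b _ => Finset.sum_congr rfl fun b' _ => ?_
          ring
  have hinv : S⁻¹ * ξ * S⁻¹ = 1 := by
    rw [← hSS, ← mul_assoc, mul_assoc _ S S, ← mul_assoc S⁻¹,
      nonsing_inv_mul S hSdet, one_mul, mul_nonsing_inv S hSdet]
  have hmain : R₁ᴴ * R₁ = 1 := by
    rw [hR₁, conjTranspose_mul]
    rw [kron_conjTranspose, conjTranspose_nonsing_inv, hSH, conjTranspose_one]
    rw [Matrix.mul_assoc, ← Matrix.mul_assoc Mᴴ, hMM, ← mul_kronecker_mul, ← mul_kronecker_mul,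
      one_mul, mul_one, ← Matrix.mul_assoc, hinv, one_kronecker_one]
  refine ⟨hmain, ?_⟩
  have h1 : (R₁ᴴ * R₁).rank = R₁.rank := rank_conjTranspose_mul_self R₁
  rw [hmain, rank_one] at h1
  have h2 := R₁.rank_le_card_height
  simp only [Fintype.card_prod, Fintype.card_fin] at h1 h2
  omega
end

section
/- Let Φ(ρ) = Σ_{j=1}^r F_j ρ F_j† be a completely positive map on M_n and W ∈ M_{n,k} an isometry with P = W W† satisfying P F_i† F_j P = λ_{ij} P where Λ = [λ_{ij}] is positive semidefinite of rank q. Then there exist a unitary R ∈ M_n and a positive definite ξ ∈ M_q with q ≤ min{r, n/k} such that for every density matrix ρ̃ ∈ M_k, R† Φ(W ρ̃ W†) R = (ξ ⊗ ρ̃) ⊕ 0_{n-qk}. -/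
open Matrix Kronecker ComplexOrder

/-- main theorem: If the Knill–Laflamme condition holds with matrix `Λ` of
rank `q`, then `q ≤ min {r, n/k}` and there are a unitary `R ∈ M_n` and a positive
definite `ξ ∈ M_q` such that for every density matrix `ρ̃ ∈ M_k`,
`Rᴴ Φ(W ρ̃ Wᴴ) R = (ξ ⊗ ρ̃) ⊕ 0_{n-qk}`. -/
theorem main_theorem (n k r q : ℕ) (hk : 1 ≤ k)
    (F : Fin r → Matrix (Fin n) (Fin n) ℂ)
    (W : Matrix (Fin n) (Fin k) ℂ) (hW : Wᴴ * W = 1)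
    (P : Matrix (Fin n) (Fin n) ℂ) (hP : P = W * Wᴴ)
    (Λ : Matrix (Fin r) (Fin r) ℂ)
    (hKL : ∀ i j, P * (F i)ᴴ * F j * P = Λ i j • P)
    (hrank : Λ.rank = q) :
    q ≤ r ∧ q ≤ n / k ∧
    ∃ (hqk : q * k ≤ n) (R : Matrix (Fin n) (Fin n) ℂ) (ξ : Matrix (Fin q) (Fin q) ℂ),
      R ∈ Matrix.unitaryGroup (Fin n) ℂ ∧ ξ.PosDef ∧
      ∀ ρtil : Matrix (Fin k) (Fin k) ℂ, ρtil.PosSemidef → ρtil.trace = 1 →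
        Rᴴ * (∑ j, F j * (W * ρtil * Wᴴ) * (F j)ᴴ) * R =
          (Matrix.fromBlocks (ξ ⊗ₖ ρtil) 0 0
              (0 : Matrix (Fin (n - q * k)) (Fin (n - q * k)) ℂ)).submatrix
            (((Equiv.sumCongr finProdFinEquiv (Equiv.refl (Fin (n - q * k)))).trans
              (finSumFinEquiv.trans (finCongr (Nat.add_sub_cancel' hqk)))).symm)
            (((Equiv.sumCongr finProdFinEquiv (Equiv.refl (Fin (n - q * k)))).trans
              (finSumFinEquiv.trans (finCongr (Nat.add_sub_cancel' hqk)))).symm) := by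
  classical
  set G : Fin r → Matrix (Fin n) (Fin k) ℂ := fun j => F j * W with hGdef
  have hGG : ∀ i j, (G i)ᴴ * G j = Λ i j • (1 : Matrix (Fin k) (Fin k) ℂ) := by
    intro i j
    have h := hKL i j
    rw [hP] at h
    have h2 : Wᴴ * (W * Wᴴ * (F i)ᴴ * F j * (W * Wᴴ)) * W = Wᴴ * (Λ i j • (W * Wᴴ)) * W :=
      congrArg (fun M => Wᴴ * M * W) h
    calc (G i)ᴴ * G j = Wᴴ * (W * Wᴴ * (F i)ᴴ * F j * (W * Wᴴ)) * W := by
          simp only [hGdef, conjTranspose_mul, ← Matrix.mul_assoc]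
          rw [hW, Matrix.one_mul]
          rw [Matrix.mul_assoc _ Wᴴ W, hW, Matrix.mul_one]
      _ = Wᴴ * (Λ i j • (W * Wᴴ)) * W := by rw [h2]
      _ = Λ i j • (1 : Matrix (Fin k) (Fin k) ℂ) := by
          rw [Matrix.mul_smul, Matrix.smul_mul, ← Matrix.mul_assoc, hW, Matrix.one_mul, hW]
  have c0 : Fin k := ⟨0, hk⟩
  have hscal : ∀ (a b : ℂ), a • (1 : Matrix (Fin k) (Fin k) ℂ) = b • 1 → a = b := by
    intro a b hab
    have := congrFun (congrFun hab ⟨0, hk⟩) ⟨0, hk⟩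
    simpa using this
  have hherm : Λ.IsHermitian := by
    rw [Matrix.IsHermitian]
    ext i j
    rw [Matrix.conjTranspose_apply]
    refine (hscal _ _ ?_).symm
    have h1 := congrArg conjTranspose (hGG j i)
    rw [Matrix.conjTranspose_mul, Matrix.conjTranspose_conjTranspose,
      Matrix.conjTranspose_smul, Matrix.conjTranspose_one] at h1
    rw [← h1, hGG i j]
  have hpsd : Λ.PosSemidef := by
    refine Matrix.PosSemidef.of_dotProduct_mulVec_nonneg hherm fun x => ?_
    set M : Matrix (Fin n) (Fin k) ℂ := ∑ j, x j • G j with hM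
    have key : Mᴴ * M = (star x ⬝ᵥ Λ *ᵥ x) • 1 := by
      rw [hM, Matrix.conjTranspose_sum, Matrix.sum_mul]
      simp only [Matrix.conjTranspose_smul, Matrix.mul_sum, Matrix.smul_mul,
        Matrix.mul_smul, hGG, smul_smul]
      rw [dotProduct, Finset.sum_smul]
      refine Finset.sum_congr rfl fun i _ => ?_
      rw [Matrix.mulVec, dotProduct, Finset.mul_sum, Finset.sum_smul]
      refine Finset.sum_congr rfl fun j _ => ?_
      rw [Pi.star_apply]
      ring_nf
    have h0 : star x ⬝ᵥ Λ *ᵥ x = (Mᴴ * M) ⟨0, hk⟩ ⟨0, hk⟩ := by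
      rw [key, Matrix.smul_apply, Matrix.one_apply_eq, smul_eq_mul, mul_one]
    rw [h0, Matrix.mul_apply]
    apply Finset.sum_nonneg
    intro l _
    rw [Matrix.conjTranspose_apply]
    exact star_mul_self_nonneg _
  have hΛh : Λ.IsHermitian := hherm
  set eig : Fin r → ℝ := hΛh.eigenvalues with heig
  have heignn : ∀ m, 0 ≤ eig m := fun m => hpsd.eigenvalues_nonneg m
  have hcard : Fintype.card {i // eig i ≠ 0} = q := by
    rw [← hrank, hΛh.rank_eq_card_non_zero_eigs]
  have hqr : q ≤ r := by
    rw [← hcard]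
    simpa using Fintype.card_subtype_le (fun i => eig i ≠ 0)
  have e1 : Fin q ≃ {i // eig i ≠ 0} := (Fintype.equivFinOfCardEq hcard).symm
  set τ : Fin q → Fin r := fun a => (e1 a).1 with hτ
  have hτinj : Function.Injective τ := fun a b hab => e1.injective (Subtype.ext hab)
  have hτne : ∀ a, eig (τ a) ≠ 0 := fun a => (e1 a).2
  set d : Fin q → ℝ := fun a => eig (τ a) with hd
  have hdpos : ∀ a, 0 < d a := fun a => lt_of_le_of_ne (heignn _) (Ne.symm (hτne a))
  set U : Matrix (Fin r) (Fin r) ℂ := (hΛh.eigenvectorUnitary : Matrix (Fin r) (Fin r) ℂ) with hUdef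
  have hU1 : Uᴴ * U = 1 := by
    rw [← Matrix.star_eq_conjTranspose]
    exact Matrix.mem_unitaryGroup_iff'.mp hΛh.eigenvectorUnitary.2
  have hU2 : U * Uᴴ = 1 := by
    rw [← Matrix.star_eq_conjTranspose]
    exact Matrix.mem_unitaryGroup_iff.mp hΛh.eigenvectorUnitary.2
  have hdiagU : Uᴴ * Λ * U = Matrix.diagonal (RCLike.ofReal ∘ eig) := by
    conv_lhs => rw [hΛh.spectral_theorem, Unitary.conjStarAlgAut_apply, ← hUdef, ← heig]
    rw [← Matrix.star_eq_conjTranspose U] at hU1 hU2 ⊢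
    have e : star U * (U * Matrix.diagonal (RCLike.ofReal ∘ eig) * star U) * U
        = (star U * U) * Matrix.diagonal (RCLike.ofReal ∘ eig) * (star U * U) := by
      simp only [Matrix.mul_assoc]
    rw [e, hU1, Matrix.one_mul, Matrix.mul_one]
  set H : Fin r → Matrix (Fin n) (Fin k) ℂ := fun m => ∑ j, U j m • G j with hH
  have smulmul : ∀ {α β γ : Type} [Fintype β] (a b : ℂ)
      (X : Matrix α β ℂ) (Y : Matrix β γ ℂ), (a • X) * (b • Y) = (a * b) • (X * Y) := by
    intro α β γ _ a b X Y
    rw [Matrix.smul_mul, Matrix.mul_smul, smul_smul]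
  have hHH : ∀ m l, (H m)ᴴ * H l = (if m = l then ((eig m : ℝ) : ℂ) else 0) • 1 := by
    intro m l
    have key : (H m)ᴴ * H l = ((Uᴴ * Λ * U) m l) • 1 := by
      rw [hH]
      rw [Matrix.conjTranspose_sum]
      simp only [Matrix.conjTranspose_smul]
      rw [Matrix.sum_mul, Matrix.mul_assoc, Matrix.mul_apply, Finset.sum_smul]
      refine Finset.sum_congr rfl fun i _ => ?_
      rw [Matrix.mul_sum, Matrix.mul_apply, Matrix.conjTranspose_apply, Finset.mul_sum,
        Finset.sum_smul]
      refine Finset.sum_congr rfl fun j _ => ?_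
      rw [smulmul, hGG, smul_smul]
      congr 1
      ring
    rw [key, hdiagU, Matrix.diagonal_apply]
    simp
  have hHzero : ∀ m, eig m = 0 → H m = 0 := by
    intro m hm
    have h2 := hHH m m
    rw [if_pos rfl, hm] at h2
    simp only [Complex.ofReal_zero, zero_smul] at h2
    exact Matrix.conjTranspose_mul_self_eq_zero.mp h2
  have hsum1 : ∀ ρ : Matrix (Fin k) (Fin k) ℂ,
      ∑ m, H m * ρ * (H m)ᴴ = ∑ j, G j * ρ * (G j)ᴴ := by
    intro ρ
    have expand : ∀ m, H m * ρ * (H m)ᴴ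
        = ∑ i, ∑ j, (U i m * star (U j m)) • (G i * ρ * (G j)ᴴ) := by
      intro m
      rw [hH, Matrix.conjTranspose_sum]
      simp only [Matrix.conjTranspose_smul]
      rw [Matrix.sum_mul, Matrix.sum_mul]
      refine Finset.sum_congr rfl fun i _ => ?_
      rw [Matrix.mul_sum]
      refine Finset.sum_congr rfl fun j _ => ?_
      rw [Matrix.smul_mul, Matrix.smul_mul, Matrix.mul_smul, smul_smul]
    calc ∑ m, H m * ρ * (H m)ᴴ
        = ∑ i, ∑ j, (∑ m, U i m * star (U j m)) • (G i * ρ * (G j)ᴴ) := by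
          simp only [expand]
          rw [Finset.sum_comm]
          refine Finset.sum_congr rfl fun i _ => ?_
          rw [Finset.sum_comm]
          refine Finset.sum_congr rfl fun j _ => ?_
          rw [Finset.sum_smul]
      _ = ∑ i, ∑ j, ((1 : Matrix (Fin r) (Fin r) ℂ) i j) • (G i * ρ * (G j)ᴴ) := by
          refine Finset.sum_congr rfl fun i _ => Finset.sum_congr rfl fun j _ => ?_
          rw [← hU2, Matrix.mul_apply]
          simp [Matrix.conjTranspose_apply]
      _ = ∑ j, G j * ρ * (G j)ᴴ := by
          refine Finset.sum_congr rfl fun i _ => ?_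
          simp [Matrix.one_apply, ite_smul]
  have hsum2 : ∀ ρ : Matrix (Fin k) (Fin k) ℂ,
      ∑ m, H m * ρ * (H m)ᴴ = ∑ a : Fin q, H (τ a) * ρ * (H (τ a))ᴴ := by
    intro ρ
    have step1 : ∑ m, H m * ρ * (H m)ᴴ
        = ∑ m ∈ Finset.univ.filter (fun m => eig m ≠ 0), H m * ρ * (H m)ᴴ := by
      refine (Finset.sum_filter_of_ne ?_).symm
      intro x _ hx
      by_contra h0
      apply hx
      rw [hHzero x (by simpa using h0)]
      simp
    have step2 : ∑ m ∈ Finset.univ.filter (fun m => eig m ≠ 0), H m * ρ * (H m)ᴴ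
        = ∑ x : {i // eig i ≠ 0}, H x.1 * ρ * (H x.1)ᴴ := by
      rw [← Finset.sum_subtype (Finset.univ.filter (fun m => eig m ≠ 0))
        (fun x => by simp) (fun m => H m * ρ * (H m)ᴴ)]
    have step3 : ∑ x : {i // eig i ≠ 0}, H x.1 * ρ * (H x.1)ᴴ
        = ∑ a : Fin q, H (τ a) * ρ * (H (τ a))ᴴ :=
      (Equiv.sum_comp e1 (fun x => H x.1 * ρ * (H x.1)ᴴ)).symm
    rw [step1, step2, step3]
  -- the positive definite matrix ξ
  set ξ : Matrix (Fin q) (Fin q) ℂ := Matrix.diagonal (fun a => ((d a : ℝ) : ℂ)) with hξ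
  have hξpd : ξ.PosDef := by
    rw [hξ, Matrix.posDef_diagonal_iff]
    intro a
    exact_mod_cast hdpos a
  -- the orthonormal family
  set v : Fin q × Fin k → EuclideanSpace ℂ (Fin n) :=
    fun p => WithLp.toLp 2 (fun i => ((Real.sqrt (d p.1) : ℝ) : ℂ)⁻¹ * H (τ p.1) i p.2) with hv
  have hinner : ∀ p p' : Fin q × Fin k,
      (inner ℂ (v p) (v p') : ℂ) = if p = p' then 1 else 0 := by
    intro p p'
    obtain ⟨a, c⟩ := p
    obtain ⟨a', c'⟩ := p'
    have hsum : ∑ i, star (H (τ a) i c) * H (τ a') i c'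
        = (if τ a = τ a' then ((eig (τ a) : ℝ) : ℂ) else 0) * (if c = c' then 1 else 0) := by
      have e2 : ∑ i, star (H (τ a) i c) * H (τ a') i c' = ((H (τ a))ᴴ * H (τ a')) c c' := by
        rw [Matrix.mul_apply]
        simp [Matrix.conjTranspose_apply]
      rw [e2, hHH, Matrix.smul_apply, Matrix.one_apply, smul_eq_mul]
    have hne0 : ∀ b : Fin q, ((Real.sqrt (d b) : ℝ) : ℂ) ≠ 0 := by
      intro b
      exact_mod_cast (Real.sqrt_pos.mpr (hdpos b)).ne'
    calc (inner ℂ (v (a, c)) (v (a', c')) : ℂ)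
        = ∑ i, (((Real.sqrt (d a) : ℝ) : ℂ)⁻¹ * ((Real.sqrt (d a') : ℝ) : ℂ)⁻¹)
            * (star (H (τ a) i c) * H (τ a') i c') := by
          rw [PiLp.inner_apply]
          refine Finset.sum_congr rfl fun i _ => ?_
          have hstar : ∀ rr : ℝ, star ((rr : ℝ) : ℂ) = ((rr : ℝ) : ℂ) := fun rr => by
            rw [Complex.star_def, Complex.conj_ofReal]
          simp only [hv, PiLp.toLp_apply, RCLike.inner_apply, starRingEnd_apply, star_mul', star_inv₀, hstar]
          ring
      _ = (((Real.sqrt (d a) : ℝ) : ℂ)⁻¹ * ((Real.sqrt (d a') : ℝ) : ℂ)⁻¹)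
            * ((if τ a = τ a' then ((eig (τ a) : ℝ) : ℂ) else 0)
               * (if c = c' then 1 else 0)) := by
          rw [← Finset.mul_sum, hsum]
      _ = if (a, c) = (a', c') then 1 else 0 := by
          by_cases haa : a = a'
          · subst haa
            rw [if_pos rfl]
            by_cases hcc : c = c'
            · subst hcc
              rw [if_pos rfl, if_pos rfl, mul_one]
              have h1 : ((Real.sqrt (d a) : ℝ) : ℂ) * ((Real.sqrt (d a) : ℝ) : ℂ)
                  = ((eig (τ a) : ℝ) : ℂ) := by
                rw [← Complex.ofReal_mul, Real.mul_self_sqrt (hdpos a).le]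
              calc ((Real.sqrt (d a) : ℝ) : ℂ)⁻¹ * ((Real.sqrt (d a) : ℝ) : ℂ)⁻¹
                    * ((eig (τ a) : ℝ) : ℂ)
                  = (((Real.sqrt (d a) : ℝ) : ℂ)⁻¹ * ((Real.sqrt (d a) : ℝ) : ℂ))
                    * (((Real.sqrt (d a) : ℝ) : ℂ)⁻¹ * ((Real.sqrt (d a) : ℝ) : ℂ)) := by
                    rw [← h1]; ring
                _ = 1 := by rw [inv_mul_cancel₀ (hne0 a), one_mul]
            · simp [hcc, Prod.ext_iff]
          · have hττ : τ a ≠ τ a' := fun h => haa (hτinj h)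
            simp [hττ, haa, Prod.ext_iff]
  have honv : Orthonormal ℂ v := orthonormal_iff_ite.mpr hinner
  have hqk : q * k ≤ n := by
    have h1 := honv.linearIndependent.fintype_card_le_finrank
    simpa [finrank_euclideanSpace_fin] using h1
  have hqnk : q ≤ n / k := Nat.le_div_iff_mul_le (Nat.lt_of_lt_of_le Nat.zero_lt_one hk) |>.mpr hqk
  set ε : (Fin q × Fin k) ⊕ Fin (n - q * k) ≃ Fin n :=
    ((Equiv.sumCongr finProdFinEquiv (Equiv.refl (Fin (n - q * k)))).trans
      (finSumFinEquiv.trans (finCongr (Nat.add_sub_cancel' hqk)))) with hε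
  set v' : Fin n → EuclideanSpace ℂ (Fin n) := fun i => Sum.elim v 0 (ε.symm i) with hv'
  set S : Set (Fin n) := Set.range (fun p => ε (Sum.inl p)) with hS
  have hv'S : ∀ p, v' (ε (Sum.inl p)) = v p := by
    intro p
    show Sum.elim v 0 (ε.symm (ε (Sum.inl p))) = v p
    rw [Equiv.symm_apply_apply]
    rfl
  have honv' : Orthonormal ℂ (S.restrict v') := by
    rw [orthonormal_iff_ite]
    rintro ⟨i, p, rfl⟩ ⟨i', p', rfl⟩
    change inner ℂ (v' (ε (Sum.inl p))) (v' (ε (Sum.inl p'))) = _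
    rw [hv'S, hv'S, hinner]
    rcases eq_or_ne p p' with h | h
    · subst h
      rw [if_pos rfl, if_pos rfl]
    · rw [if_neg h, if_neg]
      intro hc
      exact h (Sum.inl_injective (ε.injective (congrArg Subtype.val hc)))
  obtain ⟨b, hb⟩ := honv'.exists_orthonormalBasis_extension_of_card_eq
    (by simp [finrank_euclideanSpace_fin])
  have hbv : ∀ p, b (ε (Sum.inl p)) = v p := by
    intro p
    rw [hb _ ⟨p, rfl⟩, hv'S]
  set R : Matrix (Fin n) (Fin n) ℂ := Matrix.of (fun i j => b j i) with hR
  have hRU : R ∈ Matrix.unitaryGroup (Fin n) ℂ := by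
    rw [Matrix.mem_unitaryGroup_iff']
    ext j j'
    rw [Matrix.mul_apply, Matrix.one_apply]
    have hij := orthonormal_iff_ite.mp b.orthonormal j j'
    rw [← hij, PiLp.inner_apply]
    refine Finset.sum_congr rfl fun i _ => ?_
    rw [RCLike.inner_apply, starRingEnd_apply, mul_comm]
    rfl
  have hne0 : ∀ bq : Fin q, ((Real.sqrt (d bq) : ℝ) : ℂ) ≠ 0 := by
    intro bq
    exact_mod_cast (Real.sqrt_pos.mpr (hdpos bq)).ne'
  have hA : ∀ (i : Fin n) (a : Fin q) (c : Fin k),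
      (∑ s, star (b i s) * H (τ a) s c)
        = if i = ε (Sum.inl (a, c)) then ((Real.sqrt (d a) : ℝ) : ℂ) else 0 := by
    intro i a c
    have hHv : ∀ s, H (τ a) s c = ((Real.sqrt (d a) : ℝ) : ℂ) * v (a, c) s := by
      intro s
      show H (τ a) s c
          = ((Real.sqrt (d a) : ℝ) : ℂ) * (((Real.sqrt (d a) : ℝ) : ℂ)⁻¹ * H (τ a) s c)
      rw [← mul_assoc, mul_inv_cancel₀ (hne0 a), one_mul]
    calc ∑ s, star (b i s) * H (τ a) s c
        = ((Real.sqrt (d a) : ℝ) : ℂ) * ∑ s, star (b i s) * v (a, c) s := by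
          rw [Finset.mul_sum]
          refine Finset.sum_congr rfl fun s _ => ?_
          rw [hHv s]; ring
      _ = ((Real.sqrt (d a) : ℝ) : ℂ) * (inner ℂ (b i) (b (ε (Sum.inl (a, c)))) : ℂ) := by
          rw [hbv, PiLp.inner_apply]
          refine congrArg _ (Finset.sum_congr rfl fun s _ => ?_)
          rw [RCLike.inner_apply, starRingEnd_apply, mul_comm]
      _ = if i = ε (Sum.inl (a, c)) then ((Real.sqrt (d a) : ℝ) : ℂ) else 0 := by
          rw [orthonormal_iff_ite.mp b.orthonormal]
          split_ifs <;> simp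
  set E : Fin q → Matrix (Fin n) (Fin k) ℂ :=
    fun a => Matrix.of (fun i c =>
      if i = ε (Sum.inl (a, c)) then ((Real.sqrt (d a) : ℝ) : ℂ) else 0) with hE
  have hRH : ∀ a, Rᴴ * H (τ a) = E a := by
    intro a
    ext i c
    rw [Matrix.mul_apply]
    calc ∑ s, Rᴴ i s * H (τ a) s c = ∑ s, star (b i s) * H (τ a) s c := by
          refine Finset.sum_congr rfl fun s _ => ?_
          rw [Matrix.conjTranspose_apply]
          rfl
      _ = _ := hA i a c
  have final : ∀ ρtil : Matrix (Fin k) (Fin k) ℂ, ρtil.PosSemidef → ρtil.trace = 1 →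
      Rᴴ * (∑ j, F j * (W * ρtil * Wᴴ) * (F j)ᴴ) * R =
        (Matrix.fromBlocks (ξ ⊗ₖ ρtil) 0 0
            (0 : Matrix (Fin (n - q * k)) (Fin (n - q * k)) ℂ)).submatrix ⇑ε.symm ⇑ε.symm := by
    intro ρ _ _
    have hΦ : (∑ j, F j * (W * ρ * Wᴴ) * (F j)ᴴ) = ∑ a : Fin q, H (τ a) * ρ * (H (τ a))ᴴ := by
      have hGW : ∀ j, F j * (W * ρ * Wᴴ) * (F j)ᴴ = G j * ρ * (G j)ᴴ := by
        intro j
        simp only [hGdef, Matrix.conjTranspose_mul, Matrix.mul_assoc]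
      rw [Finset.sum_congr rfl fun j _ => hGW j, ← hsum1 ρ, hsum2 ρ]
    have hmain : Rᴴ * (∑ a : Fin q, H (τ a) * ρ * (H (τ a))ᴴ) * R
        = ∑ a : Fin q, E a * ρ * (E a)ᴴ := by
      rw [Matrix.mul_sum, Matrix.sum_mul]
      refine Finset.sum_congr rfl fun a _ => ?_
      have e3 : Rᴴ * (H (τ a) * ρ * (H (τ a))ᴴ) * R
          = (Rᴴ * H (τ a)) * ρ * (Rᴴ * H (τ a))ᴴ := by
        rw [Matrix.conjTranspose_mul, Matrix.conjTranspose_conjTranspose]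
        simp only [Matrix.mul_assoc]
      rw [e3, hRH]
    rw [hΦ, hmain]
    ext i i'
    rw [Matrix.submatrix_apply]
    obtain ⟨u, rfl⟩ : ∃ u, ε u = i := ⟨ε.symm i, ε.apply_symm_apply i⟩
    obtain ⟨u', rfl⟩ : ∃ u', ε u' = i' := ⟨ε.symm i', ε.apply_symm_apply i'⟩
    rw [Equiv.symm_apply_apply, Equiv.symm_apply_apply, Matrix.sum_apply]
    have hEntry : ∀ a, (E a * ρ * (E a)ᴴ) (ε u) (ε u')
        = ∑ c', (∑ c, (if u = Sum.inl (a, c) then ((Real.sqrt (d a) : ℝ) : ℂ) else 0)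
            * ρ c c')
          * star (if u' = Sum.inl (a, c') then ((Real.sqrt (d a) : ℝ) : ℂ) else 0) := by
      intro a
      rw [Matrix.mul_apply]
      refine Finset.sum_congr rfl fun c' _ => ?_
      rw [Matrix.conjTranspose_apply, Matrix.mul_apply]
      congr 1
      · refine Finset.sum_congr rfl fun c _ => ?_
        congr 2
        simp only [hE, Matrix.of_apply, Equiv.apply_eq_iff_eq]
      · congr 1
        simp only [hE, Matrix.of_apply, Equiv.apply_eq_iff_eq]
    rw [Finset.sum_congr rfl fun a _ => hEntry a]
    rcases u with p | x
    · obtain ⟨a₀, c₀⟩ := p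
      rcases u' with p' | x'
      · obtain ⟨a₁, c₁⟩ := p'
        rw [Matrix.fromBlocks_apply₁₁]
        simp only [Sum.inl.injEq, Prod.mk.injEq, Matrix.kroneckerMap_apply, hξ,
          Matrix.diagonal_apply, ite_mul, mul_ite, zero_mul, mul_zero,
          ite_and, Finset.sum_ite_eq, Finset.mem_univ, if_true]
        rw [Finset.sum_eq_single a₀ ?side1 ?side2]
        case side1 =>
          intro xx _ hxx
          have hne : a₀ ≠ xx := fun h => hxx h.symm
          simp [hne]
        case side2 => intro h; exact absurd (Finset.mem_univ a₀) h
        simp only [if_pos rfl, Finset.sum_ite_eq, Finset.mem_univ, if_true]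
        by_cases haa : a₁ = a₀
        · subst haa
          have hstar2 : star ((Real.sqrt (d a₁) : ℝ) : ℂ) = ((Real.sqrt (d a₁) : ℝ) : ℂ) := by
            rw [Complex.star_def, Complex.conj_ofReal]
          have h1 : ((Real.sqrt (d a₁) : ℝ) : ℂ) * ((Real.sqrt (d a₁) : ℝ) : ℂ)
              = ((d a₁ : ℝ) : ℂ) := by
            rw [← Complex.ofReal_mul, Real.mul_self_sqrt (hdpos a₁).le]
          simp only [if_pos rfl, apply_ite (star : ℂ → ℂ), hstar2, star_zero, mul_ite,
            mul_zero, Finset.sum_ite_eq, Finset.mem_univ, if_true]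
          rw [← h1]
          ring
        · have hne : a₀ ≠ a₁ := fun h => haa h.symm
          simp [haa, hne]
      · rw [Matrix.fromBlocks_apply₁₂]
        simp
    · rcases u' with p' | x'
      · rw [Matrix.fromBlocks_apply₂₁]
        simp
      · rw [Matrix.fromBlocks_apply₂₂]
        simp only [apply_ite (star : ℂ → ℂ), star_zero, ite_mul, mul_ite, zero_mul, mul_zero,
          ite_and, reduceCtorEq, if_false, Finset.sum_const_zero, Matrix.zero_apply]
  exact ⟨hqr, hqnk, hqk, R, ξ, hRU, hξpd, final⟩
end

section
/- Suppose k divides n and identify M_n ≅ M_{n/k} ⊗ M_k. Under the hypotheses of the main theorem, the map Ψ : M_n → M_n defined by Ψ(ρ') = W (tr_1(R† ρ' R)) W† satisfies Ψ(Φ(ρ)) = (tr ξ) ρ for every ρ of the form ρ = W ρ̃ W† with ρ̃ ∈ M_k a density matrix; in particular, if Φ is trace preserving then Ψ ∘ Φ(ρ) = ρ. -/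
open Matrix Kronecker ComplexOrder

theorem trace_submatrix_equiv' {α n m : Type*} [Fintype n] [Fintype m] [AddCommMonoid α]
    (A : Matrix m m α) (e : n ≃ m) : (A.submatrix e e).trace = A.trace := by
  simp only [Matrix.trace, Matrix.diag, Matrix.submatrix_apply]
  exact Equiv.sum_comp e (fun i => A i i)

/-- Suppose `k ∣ n`, `n = m k`, and identify `M_n ≅ M_m ⊗ M_k` (indices
`Fin m × Fin k`).  Under the hypotheses of the main theorem (here: `R` unitary, `ξ`
positive definite with `Rᴴ Φ(W ρ̃ Wᴴ) R = (ξ ⊕ 0) ⊗ ρ̃`), the recovery map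
`Ψ(ρ') = W (tr₁(Rᴴ ρ' R)) Wᴴ` satisfies `Ψ(Φ(ρ)) = (tr ξ) ρ` for every encoded density
matrix `ρ = W ρ̃ Wᴴ`; in particular `Ψ(Φ(ρ)) = ρ` if `Φ` is trace preserving. -/
theorem recovery_channel (m k r q : ℕ) (hk : 1 ≤ k) (hq : q ≤ m)
    (F : Fin r → Matrix (Fin m × Fin k) (Fin m × Fin k) ℂ)
    (W : Matrix (Fin m × Fin k) (Fin k) ℂ) (hW : Wᴴ * W = 1)
    (R : Matrix (Fin m × Fin k) (Fin m × Fin k) ℂ)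
    (hR : R ∈ Matrix.unitaryGroup (Fin m × Fin k) ℂ)
    (ξ : Matrix (Fin q) (Fin q) ℂ) (hξ : ξ.PosDef)
    (ξ' : Matrix (Fin m) (Fin m) ℂ)
    (hξ' : ξ' = (Matrix.fromBlocks ξ 0 0 (0 : Matrix (Fin (m - q)) (Fin (m - q)) ℂ)).submatrix
        (finSumFinEquiv.trans (finCongr (Nat.add_sub_cancel' hq))).symm
        (finSumFinEquiv.trans (finCongr (Nat.add_sub_cancel' hq))).symm)
    (hmain : ∀ ρtil : Matrix (Fin k) (Fin k) ℂ, ρtil.PosSemidef → ρtil.trace = 1 →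
      Rᴴ * (∑ j, F j * (W * ρtil * Wᴴ) * (F j)ᴴ) * R = ξ' ⊗ₖ ρtil)
    (tr₁ : Matrix (Fin m × Fin k) (Fin m × Fin k) ℂ → Matrix (Fin k) (Fin k) ℂ)
    (htr₁ : ∀ A, tr₁ A = Matrix.of fun a b => ∑ i, A (i, a) (i, b))
    (Ψ : Matrix (Fin m × Fin k) (Fin m × Fin k) ℂ → Matrix (Fin m × Fin k) (Fin m × Fin k) ℂ)
    (hΨ : ∀ ρ', Ψ ρ' = W * tr₁ (Rᴴ * ρ' * R) * Wᴴ) :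
    ∀ ρtil : Matrix (Fin k) (Fin k) ℂ, ρtil.PosSemidef → ρtil.trace = 1 →
      Ψ (∑ j, F j * (W * ρtil * Wᴴ) * (F j)ᴴ) = ξ.trace • (W * ρtil * Wᴴ) ∧
      ((∑ j, (F j)ᴴ * F j = 1) →
        Ψ (∑ j, F j * (W * ρtil * Wᴴ) * (F j)ᴴ) = W * ρtil * Wᴴ) := by
  intro ρtil hpsd htr
  have hξtr : ξ'.trace = ξ.trace := by
    subst hξ'
    rw [trace_submatrix_equiv']
    simp [Matrix.trace, Fintype.sum_sum_type, Matrix.diag]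
  have hmain' := hmain ρtil hpsd htr
  have htr1 : tr₁ (Rᴴ * (∑ j, F j * (W * ρtil * Wᴴ) * (F j)ᴴ) * R) = ξ.trace • ρtil := by
    rw [hmain', htr₁]
    ext a b
    simp only [Matrix.of_apply, Matrix.kroneckerMap_apply, Matrix.smul_apply, smul_eq_mul]
    rw [← Finset.sum_mul, ← hξtr]
    rfl
  have hmn : Ψ (∑ j, F j * (W * ρtil * Wᴴ) * (F j)ᴴ) = ξ.trace • (W * ρtil * Wᴴ) := by
    rw [hΨ, htr1, Matrix.mul_smul, Matrix.smul_mul]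
  refine ⟨hmn, fun hTP => ?_⟩
  have hRR : R * Rᴴ = 1 := by
    exact hR.2
  have hξ1 : ξ.trace = 1 := by
    have h := congrArg Matrix.trace hmain'
    rw [Matrix.trace_kronecker, htr, mul_one, Matrix.trace_mul_cycle,
      hRR, Matrix.one_mul, Matrix.trace_sum] at h
    have heq : ∀ j, (F j * (W * ρtil * Wᴴ) * (F j)ᴴ).trace
        = ((F j)ᴴ * F j * (W * ρtil * Wᴴ)).trace := by
      intro j
      rw [Matrix.trace_mul_cycle, ← Matrix.mul_assoc]
    rw [Finset.sum_congr rfl (fun j _ => heq j), ← Matrix.trace_sum,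
      ← Finset.sum_mul, hTP, Matrix.one_mul, Matrix.trace_mul_cycle,
      hW, Matrix.one_mul, htr] at h
    rw [← hξtr, ← h]
  rw [hmn, hξ1, one_smul]
end

section
/- Let Φ(ρ) = Σ_{j=1}^r F_j ρ F_j† satisfy the hypotheses of the main theorem with unitary R and positive definite ξ ∈ M_q. Let Φ̃(ρ) = Σ_{j=1}^s F̃_j ρ F̃_j† where each F̃_j is a linear combination of F_1,...,F_r. Then there is a positive semidefinite matrix ξ̃ ∈ M_q such that for every density matrix ρ̃ ∈ M_k, R† Φ̃(W ρ̃ W†) R = (ξ̃ ⊗ ρ̃) ⊕ 0_{n-qk}. Moreover ξ̃ = ξ^{1/2} T T† ξ^{1/2} where T ∈ M_q is formed from the coefficients of the linear combinations restricted to F_1,...,F_q. -/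
open Matrix Kronecker ComplexOrder

/-- The positive semidefinite square root of a positive semidefinite matrix
(the definition Mathlib had, since removed). -/
noncomputable def Matrix.PosSemidef.sqrt {n 𝕜 : Type*} [Fintype n] [DecidableEq n] [RCLike 𝕜]
    {A : Matrix n n 𝕜} (hA : A.PosSemidef) : Matrix n n 𝕜 :=
  (hA.1.eigenvectorUnitary : Matrix n n 𝕜) *
    diagonal (fun i => ((Real.sqrt (hA.1.eigenvalues i) : ℝ) : 𝕜)) *
    (star hA.1.eigenvectorUnitary : Matrix n n 𝕜)

private lemma kron_conjT {l m p n : Type*} (A : Matrix l m ℂ) (B : Matrix p n ℂ) :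
    (A ⊗ₖ B)ᴴ = Aᴴ ⊗ₖ Bᴴ := by
  ext ⟨i, j⟩ ⟨a, b⟩
  simp [Matrix.conjTranspose_apply, Matrix.kroneckerMap_apply]

private lemma submatrix_mul_mul_conjT {ι κ μ : Type*} [Fintype κ]
    (A : Matrix ι κ ℂ) (X : Matrix κ κ ℂ) (g : μ → ι) :
    A.submatrix g id * X * (A.submatrix g id)ᴴ = (A * X * Aᴴ).submatrix g g := by
  ext a b
  simp [Matrix.mul_apply, Matrix.conjTranspose_apply]

/-- Theorem 3: In the setting of the main theorem (isometry `W`,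
`P F_iᴴ F_j P = ξ_{ij} P` for `i, j ≤ q` with `ξ` positive definite, `F_j W = 0` for
`j > q`, and constructed unitary `R` with `Rᴴ F (I_q ⊗ W) = [(ξ^{1/2} ⊗ I_k); 0]`),
if `Φ̃(ρ) = ∑ⱼ F̃ⱼ ρ F̃ⱼᴴ` where each `F̃ⱼ = ∑ᵢ tᵢⱼ Fᵢ`, then with
`ξ̃ = ξ^{1/2} T Tᴴ ξ^{1/2}` (where `T` is formed from the coefficients restricted to
`F₁, …, F_q`) we have `Rᴴ Φ̃(W ρ̃ Wᴴ) R = (ξ̃ ⊗ ρ̃) ⊕ 0` for every density matrix `ρ̃`,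
and `ξ̃` is positive semidefinite. -/
theorem same_recovery_for_linear_combinations (n k r s q : ℕ) (hqr : q ≤ r)
    (hqk : q * k ≤ n)
    (F : Fin r → Matrix (Fin n) (Fin n) ℂ)
    (W : Matrix (Fin n) (Fin k) ℂ) (hW : Wᴴ * W = 1)
    (ξ : Matrix (Fin q) (Fin q) ℂ) (hξ : ξ.PosDef)
    (hKL : ∀ i j : Fin q,
      (W * Wᴴ) * (F (Fin.castLE hqr i))ᴴ * F (Fin.castLE hqr j) * (W * Wᴴ) =
        ξ i j • (W * Wᴴ))
    (hFW : ∀ j : Fin r, q ≤ (j : ℕ) → F j * W = 0)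
    (Fmat : Matrix (Fin n) (Fin q × Fin n) ℂ)
    (hFmat : ∀ (a : Fin n) (p : Fin q × Fin n), Fmat a p = F (Fin.castLE hqr p.1) a p.2)
    (R : Matrix (Fin n) (Fin n) ℂ) (hRu : R ∈ Matrix.unitaryGroup (Fin n) ℂ)
    (hR : Rᴴ * Fmat * ((1 : Matrix (Fin q) (Fin q) ℂ) ⊗ₖ W) =
      (Matrix.fromRows (hξ.posSemidef.sqrt ⊗ₖ (1 : Matrix (Fin k) (Fin k) ℂ))
          (0 : Matrix (Fin (n - q * k)) (Fin q × Fin k) ℂ)).submatrix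
        (((Equiv.sumCongr finProdFinEquiv (Equiv.refl (Fin (n - q * k)))).trans
          (finSumFinEquiv.trans (finCongr (Nat.add_sub_cancel' hqk)))).symm) id)
    (t : Fin r → Fin s → ℂ)
    (Ftil : Fin s → Matrix (Fin n) (Fin n) ℂ)
    (hFtil : ∀ j, Ftil j = ∑ i, t i j • F i)
    (T : Matrix (Fin q) (Fin s) ℂ) (hT : ∀ i j, T i j = t (Fin.castLE hqr i) j)
    (ξtil : Matrix (Fin q) (Fin q) ℂ)
    (hξtil : ξtil = hξ.posSemidef.sqrt * (T * Tᴴ) * hξ.posSemidef.sqrt) :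
    ξtil.PosSemidef ∧
    ∀ ρtil : Matrix (Fin k) (Fin k) ℂ, ρtil.PosSemidef → ρtil.trace = 1 →
      Rᴴ * (∑ j, Ftil j * (W * ρtil * Wᴴ) * (Ftil j)ᴴ) * R =
        (Matrix.fromBlocks (ξtil ⊗ₖ ρtil) 0 0
            (0 : Matrix (Fin (n - q * k)) (Fin (n - q * k)) ℂ)).submatrix
          (((Equiv.sumCongr finProdFinEquiv (Equiv.refl (Fin (n - q * k)))).trans
            (finSumFinEquiv.trans (finCongr (Nat.add_sub_cancel' hqk)))).symm)
          (((Equiv.sumCongr finProdFinEquiv (Equiv.refl (Fin (n - q * k)))).trans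
            (finSumFinEquiv.trans (finCongr (Nat.add_sub_cancel' hqk)))).symm) := by
  classical
  have hS : (hξ.posSemidef.sqrt)ᴴ = hξ.posSemidef.sqrt := by
    simp only [Matrix.PosSemidef.sqrt, Matrix.conjTranspose_mul, Matrix.diagonal_conjTranspose,
      Unitary.coe_star, Matrix.star_eq_conjTranspose, Matrix.conjTranspose_conjTranspose,
      Matrix.mul_assoc]
    congr 2
    congr 1
    funext i
    simp
  constructor
  · rw [hξtil]
    have h1 : (T * Tᴴ).PosSemidef := Matrix.posSemidef_self_mul_conjTranspose T
    have h2 := h1.mul_mul_conjTranspose_same hξ.posSemidef.sqrt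
    rwa [hS] at h2
  · intro ρ hρ hρt
    set e := ((Equiv.sumCongr finProdFinEquiv (Equiv.refl (Fin (n - q * k)))).trans
          (finSumFinEquiv.trans (finCongr (Nat.add_sub_cancel' hqk)))) with he
    set S := hξ.posSemidef.sqrt with hSdef
    set C : Fin s → Matrix (Fin q × Fin k) (Fin k) ℂ :=
      fun j => Matrix.of fun p c => T p.1 j * (if p.2 = c then 1 else 0) with hC
    -- Step 1: Ftil j * W is a linear combination of the first q Kraus operators times W
    have hinj : ∀ x ∈ (Finset.univ : Finset (Fin q)), ∀ y ∈ (Finset.univ : Finset (Fin q)),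
        Fin.castLE hqr x = Fin.castLE hqr y → x = y :=
      fun x _ y _ h => Fin.castLE_injective hqr h
    have hFtilW : ∀ j, Ftil j * W = ∑ i : Fin q, T i j • (F (Fin.castLE hqr i) * W) := by
      intro j
      rw [hFtil, Matrix.sum_mul]
      simp only [Matrix.smul_mul]
      have h0 : ∀ i ∈ (Finset.univ : Finset (Fin r)),
          i ∉ Finset.univ.image (Fin.castLE hqr) → t i j • (F i * W) = 0 := by
        intro i _ hi
        have hq : q ≤ (i : ℕ) := by
          by_contra h
          push_neg at h
          exact hi (Finset.mem_image.mpr ⟨⟨(i : ℕ), h⟩, Finset.mem_univ _, by ext; simp⟩)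
        rw [hFW i hq, smul_zero]
      rw [← Finset.sum_subset (Finset.subset_univ _) h0, Finset.sum_image hinj]
      exact Finset.sum_congr rfl fun i _ => by rw [hT]
    -- Step 2: entries of Fmat * (1 ⊗ W)
    have hGent : ∀ (a : Fin n) (i : Fin q) (c : Fin k),
        (Fmat * ((1 : Matrix (Fin q) (Fin q) ℂ) ⊗ₖ W)) a (i, c) =
          (F (Fin.castLE hqr i) * W) a c := by
      intro a i c
      rw [Matrix.mul_apply, Fintype.sum_prod_type, Matrix.mul_apply]
      rw [Finset.sum_eq_single i]
      · exact Finset.sum_congr rfl fun b _ => by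
          simp [hFmat, Matrix.kroneckerMap_apply, Matrix.one_apply]
      · intro x _ hx
        simp [Matrix.kroneckerMap_apply, Matrix.one_apply, hx]
      · intro h
        exact absurd (Finset.mem_univ i) h
    -- Step 3: the same combination via Fmat and C j
    have hGC : ∀ j, Fmat * ((1 : Matrix (Fin q) (Fin q) ℂ) ⊗ₖ W) * C j =
        ∑ i : Fin q, T i j • (F (Fin.castLE hqr i) * W) := by
      intro j
      ext a c
      rw [Matrix.mul_apply, Fintype.sum_prod_type]
      simp only [hC, Matrix.of_apply, mul_ite, mul_one, mul_zero,
        Finset.sum_ite_eq', Finset.mem_univ, if_true, Matrix.sum_apply,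
        Matrix.smul_apply, smul_eq_mul]
      exact Finset.sum_congr rfl fun i _ => by rw [hGent]; ring
    have hFW2 : ∀ j, Ftil j * W = Fmat * ((1 : Matrix (Fin q) (Fin q) ℂ) ⊗ₖ W) * C j := by
      intro j; rw [hFtilW, hGC]
    -- Step 4: ∑ⱼ Cⱼ ρ Cⱼᴴ = (T Tᴴ) ⊗ ρ
    have hB : ∑ j : Fin s, C j * ρ * (C j)ᴴ = (T * Tᴴ) ⊗ₖ ρ := by
      ext p p'
      obtain ⟨i, b⟩ := p
      obtain ⟨i', b'⟩ := p'
      simp only [Matrix.sum_apply, Matrix.mul_apply, Matrix.conjTranspose_apply, hC,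
        Matrix.of_apply, Matrix.kroneckerMap_apply, ite_mul, mul_ite, one_mul, mul_one,
        zero_mul, mul_zero, star_mul', apply_ite (star : ℂ → ℂ), star_zero, star_one,
        Finset.sum_ite_eq, Finset.sum_ite_eq', Finset.mem_univ, if_true]
      rw [Finset.sum_mul]
      exact Finset.sum_congr rfl fun j _ => by ring
    -- Step 5: put it together
    set M := (Matrix.fromRows (S ⊗ₖ (1 : Matrix (Fin k) (Fin k) ℂ))
        (0 : Matrix (Fin (n - q * k)) (Fin q × Fin k) ℂ)).submatrix
        (e.symm : Fin n → (Fin q × Fin k) ⊕ Fin (n - q * k)) id with hM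
    have hRM : Rᴴ * (Fmat * ((1 : Matrix (Fin q) (Fin q) ℂ) ⊗ₖ W)) = M := by
      rw [← Matrix.mul_assoc]; exact hR
    have key : Rᴴ * (∑ j, Ftil j * (W * ρ * Wᴴ) * (Ftil j)ᴴ) * R =
        M * ((T * Tᴴ) ⊗ₖ ρ) * Mᴴ := by
      rw [← hB, Matrix.mul_sum, Matrix.sum_mul, Matrix.mul_sum, Matrix.sum_mul]
      refine Finset.sum_congr rfl fun j _ => ?_
      have h1 : Rᴴ * (Ftil j * (W * ρ * Wᴴ) * (Ftil j)ᴴ) * R =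
          (Rᴴ * (Ftil j * W)) * ρ * (Rᴴ * (Ftil j * W))ᴴ := by
        simp only [Matrix.conjTranspose_mul, Matrix.conjTranspose_conjTranspose]
        noncomm_ring [Matrix.mul_assoc]
      rw [h1, hFW2, ← Matrix.mul_assoc, hRM]
      simp only [Matrix.conjTranspose_mul]
      noncomm_ring [Matrix.mul_assoc]
    have hkron : (S ⊗ₖ (1 : Matrix (Fin k) (Fin k) ℂ)) * ((T * Tᴴ) ⊗ₖ ρ) *
        (S ⊗ₖ (1 : Matrix (Fin k) (Fin k) ℂ))ᴴ = ξtil ⊗ₖ ρ := by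
      rw [kron_conjT, hS, Matrix.conjTranspose_one, ← Matrix.mul_kronecker_mul,
        ← Matrix.mul_kronecker_mul, Matrix.one_mul, Matrix.mul_one, ← hξtil]
    have hA : Matrix.fromRows (S ⊗ₖ (1 : Matrix (Fin k) (Fin k) ℂ))
          (0 : Matrix (Fin (n - q * k)) (Fin q × Fin k) ℂ) * ((T * Tᴴ) ⊗ₖ ρ) *
          (Matrix.fromRows (S ⊗ₖ (1 : Matrix (Fin k) (Fin k) ℂ))
            (0 : Matrix (Fin (n - q * k)) (Fin q × Fin k) ℂ))ᴴ =
          Matrix.fromBlocks (ξtil ⊗ₖ ρ) 0 0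
            (0 : Matrix (Fin (n - q * k)) (Fin (n - q * k)) ℂ) := by
      rw [Matrix.conjTranspose_fromRows_eq_fromCols_conjTranspose, Matrix.fromRows_mul,
        Matrix.zero_mul, Matrix.fromRows_mul_fromCols, hkron]
      simp
    rw [key, hM, submatrix_mul_mul_conjT, hA]
end

section
/- Let R = E_{11} + E_{27} + E_{35} + E_{44} + E_{53} + E_{66} + E_{78} + E_{82} ∈ M_8 (a permutation matrix), W ∈ M_{8,2} the isometry with columns e_1, e_8, and Φ(ρ) = Σ_{j=0}^3 F_j ρ F_j† the 3-qubit bit-flip channel with F_0 = √p_0 I^{⊗3}, F_1 = √p_1 σ_x⊗I⊗I, F_2 = √p_2 I⊗σ_x⊗I, F_3 = √p_3 I⊗I⊗σ_x, p_j ≥ 0. Then for every ρ̃ ∈ M_2, R† Φ(W ρ̃ W†) R = diag(p_0, p_1, p_2, p_3) ⊗ ρ̃. -/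
open Matrix Kronecker

/-- `Fin 8 ≃ Fin 2 × Fin 2 × Fin 2`, sending `4b₂ + 2b₁ + b₀` to `(b₂, b₁, b₀)`
(standard binary ordering of the 3-qubit computational basis, `|000⟩ = e₁`, `|111⟩ = e₈`). -/
def qubit3Equiv : Fin 2 × Fin 2 × Fin 2 ≃ Fin 8 :=
  (((Equiv.refl (Fin 2)).prodCongr finProdFinEquiv).trans finProdFinEquiv).trans
    (finCongr (by norm_num))

/-- `Fin 4 × Fin 2 ≃ Fin 8`, sending `(i, j)` to `2i + j` (identifying `M₈ ≅ M₄ ⊗ M₂`). -/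
def fourTwoEquiv : Fin 4 × Fin 2 ≃ Fin 8 :=
  finProdFinEquiv.trans (finCongr (by norm_num))

/-! ### Auxiliary machinery -/

/-- The permutation matrix with `1` at `(a, g a)`. -/
def permMat (g : Fin 8 → Fin 8) : Matrix (Fin 8) (Fin 8) ℂ :=
  Matrix.of fun a b => if b = g a then 1 else 0

lemma permMat_mul_conj (g : Fin 8 → Fin 8) (A : Matrix (Fin 8) (Fin 8) ℂ) :
    permMat g * A * (permMat g)ᴴ = A.submatrix g g := by
  ext a b
  simp [permMat, Matrix.mul_apply, Matrix.conjTranspose_apply, ite_mul, mul_ite,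
    Finset.sum_ite_eq, Finset.sum_ite_eq', apply_ite (starRingEnd ℂ)]

lemma conj_permMat (g h : Fin 8 → Fin 8) (hgh : ∀ a i, i = g a ↔ a = h i)
    (M : Matrix (Fin 8) (Fin 8) ℂ) :
    (permMat g)ᴴ * M * permMat g = M.submatrix h h := by
  ext i j
  simp only [permMat, Matrix.mul_apply, Matrix.conjTranspose_apply, Matrix.of_apply]
  simp [hgh, ite_mul, mul_ite, Finset.sum_ite_eq, Finset.sum_ite_eq',
    apply_ite (starRingEnd ℂ)]

lemma smul_perm_conj (r : ℝ) (hr : 0 ≤ r) (g : Fin 8 → Fin 8)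
    (A : Matrix (Fin 8) (Fin 8) ℂ) :
    (((Real.sqrt r : ℝ) : ℂ) • permMat g) * A * (((Real.sqrt r : ℝ) : ℂ) • permMat g)ᴴ
      = ((r : ℝ) : ℂ) • A.submatrix g g := by
  simp only [Matrix.conjTranspose_smul, Matrix.smul_mul, Matrix.mul_smul, smul_smul,
    permMat_mul_conj]
  congr 1
  rw [Complex.star_def, Complex.conj_ofReal, ← Complex.ofReal_mul, Real.mul_self_sqrt hr]

lemma permMat_eq_sum (g : Fin 8 → Fin 8) :
    permMat g = ∑ i, Matrix.single i (g i) 1 := by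
  ext a b
  simp [permMat, Matrix.single, Matrix.sum_apply, ite_and, Finset.sum_ite_eq,
    eq_comm]

lemma mul_ind (a b : Prop) [Decidable a] [Decidable b] :
    (if a then (1:ℂ) else 0) * (if b then 1 else 0) = if a ∧ b then 1 else 0 := by
  by_cases ha : a <;> by_cases hb : b <;> simp [ha, hb]

lemma ind_congr {a b : Prop} [Decidable a] [Decidable b] (h : a ↔ b) :
    (if a then (1:ℂ) else 0) = if b then 1 else 0 := if_congr h rfl rfl

def gB1 : Fin 8 → Fin 8 := ![4,5,6,7,0,1,2,3]
def gB2 : Fin 8 → Fin 8 := ![2,3,0,1,6,7,4,5]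
def gB3 : Fin 8 → Fin 8 := ![1,0,3,2,5,4,7,6]
def tauP : Fin 8 → Fin 8 := ![0,6,4,3,2,5,7,1]
def piP : Fin 8 → Fin 8 := ![0,7,4,3,2,5,1,6]

@[simp] lemma piP_0 : piP 0 = 0 := rfl
@[simp] lemma piP_1 : piP 1 = 7 := rfl
@[simp] lemma piP_2 : piP 2 = 4 := rfl
@[simp] lemma piP_3 : piP 3 = 3 := rfl
@[simp] lemma piP_4 : piP 4 = 2 := rfl
@[simp] lemma piP_5 : piP 5 = 5 := rfl
@[simp] lemma piP_6 : piP 6 = 1 := rfl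
@[simp] lemma piP_7 : piP 7 = 6 := rfl
@[simp] lemma gB1_0 : gB1 0 = 4 := rfl
@[simp] lemma gB1_1 : gB1 1 = 5 := rfl
@[simp] lemma gB1_2 : gB1 2 = 6 := rfl
@[simp] lemma gB1_3 : gB1 3 = 7 := rfl
@[simp] lemma gB1_4 : gB1 4 = 0 := rfl
@[simp] lemma gB1_5 : gB1 5 = 1 := rfl
@[simp] lemma gB1_6 : gB1 6 = 2 := rfl
@[simp] lemma gB1_7 : gB1 7 = 3 := rfl
@[simp] lemma gB2_0 : gB2 0 = 2 := rfl
@[simp] lemma gB2_1 : gB2 1 = 3 := rfl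
@[simp] lemma gB2_2 : gB2 2 = 0 := rfl
@[simp] lemma gB2_3 : gB2 3 = 1 := rfl
@[simp] lemma gB2_4 : gB2 4 = 6 := rfl
@[simp] lemma gB2_5 : gB2 5 = 7 := rfl
@[simp] lemma gB2_6 : gB2 6 = 4 := rfl
@[simp] lemma gB2_7 : gB2 7 = 5 := rfl
@[simp] lemma gB3_0 : gB3 0 = 1 := rfl
@[simp] lemma gB3_1 : gB3 1 = 0 := rfl
@[simp] lemma gB3_2 : gB3 2 = 3 := rfl
@[simp] lemma gB3_3 : gB3 3 = 2 := rfl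
@[simp] lemma gB3_4 : gB3 4 = 5 := rfl
@[simp] lemma gB3_5 : gB3 5 = 4 := rfl
@[simp] lemma gB3_6 : gB3 6 = 7 := rfl
@[simp] lemma gB3_7 : gB3 7 = 6 := rfl
@[simp] lemma f2_0 : fourTwoEquiv.symm 0 = ((0:Fin 4), (0:Fin 2)) := rfl
@[simp] lemma f2_1 : fourTwoEquiv.symm 1 = ((0:Fin 4), (1:Fin 2)) := rfl
@[simp] lemma f2_2 : fourTwoEquiv.symm 2 = ((1:Fin 4), (0:Fin 2)) := rfl
@[simp] lemma f2_3 : fourTwoEquiv.symm 3 = ((1:Fin 4), (1:Fin 2)) := rfl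
@[simp] lemma f2_4 : fourTwoEquiv.symm 4 = ((2:Fin 4), (0:Fin 2)) := rfl
@[simp] lemma f2_5 : fourTwoEquiv.symm 5 = ((2:Fin 4), (1:Fin 2)) := rfl
@[simp] lemma f2_6 : fourTwoEquiv.symm 6 = ((3:Fin 4), (0:Fin 2)) := rfl
@[simp] lemma f2_7 : fourTwoEquiv.symm 7 = ((3:Fin 4), (1:Fin 2)) := rfl

set_option maxHeartbeats 2000000 in
/-- With the permutation matrix
`R = E₁₁ + E₂₇ + E₃₅ + E₄₄ + E₅₃ + E₆₆ + E₇₈ + E₈₂`, the isometry `W` with columns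
`e₁, e₈`, and the 3-qubit bit-flip channel `Φ`, one has
`Rᴴ Φ(W ρ̃ Wᴴ) R = diag(p₀, p₁, p₂, p₃) ⊗ ρ̃` for every `ρ̃ ∈ M₂`. -/
theorem bitflip_recovery (p : Fin 4 → ℝ) (hp : ∀ j, 0 ≤ p j)
    (σx : Matrix (Fin 2) (Fin 2) ℂ) (hσx : σx = !![0, 1; 1, 0])
    (F : Fin 4 → Matrix (Fin 8) (Fin 8) ℂ)
    (hF0 : F 0 = ((Real.sqrt (p 0) : ℝ) : ℂ) •
      (((1 : Matrix (Fin 2) (Fin 2) ℂ) ⊗ₖ ((1 : Matrix (Fin 2) (Fin 2) ℂ) ⊗ₖ 1)).submatrix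
        qubit3Equiv.symm qubit3Equiv.symm))
    (hF1 : F 1 = ((Real.sqrt (p 1) : ℝ) : ℂ) •
      ((σx ⊗ₖ ((1 : Matrix (Fin 2) (Fin 2) ℂ) ⊗ₖ 1)).submatrix
        qubit3Equiv.symm qubit3Equiv.symm))
    (hF2 : F 2 = ((Real.sqrt (p 2) : ℝ) : ℂ) •
      (((1 : Matrix (Fin 2) (Fin 2) ℂ) ⊗ₖ (σx ⊗ₖ 1)).submatrix
        qubit3Equiv.symm qubit3Equiv.symm))
    (hF3 : F 3 = ((Real.sqrt (p 3) : ℝ) : ℂ) •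
      (((1 : Matrix (Fin 2) (Fin 2) ℂ) ⊗ₖ ((1 : Matrix (Fin 2) (Fin 2) ℂ) ⊗ₖ σx)).submatrix
        qubit3Equiv.symm qubit3Equiv.symm))
    (W : Matrix (Fin 8) (Fin 2) ℂ)
    (hW : W = Matrix.of fun a b => if (a = 0 ∧ b = 0) ∨ (a = 7 ∧ b = 1) then 1 else 0)
    (R : Matrix (Fin 8) (Fin 8) ℂ)
    (hR : R = Matrix.single 0 0 1 + Matrix.single 1 6 1 +
      Matrix.single 2 4 1 + Matrix.single 3 3 1 +
      Matrix.single 4 2 1 + Matrix.single 5 5 1 +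
      Matrix.single 6 7 1 + Matrix.single 7 1 1) :
    ∀ ρtil : Matrix (Fin 2) (Fin 2) ℂ,
      Rᴴ * (∑ j, F j * (W * ρtil * Wᴴ) * (F j)ᴴ) * R =
        ((Matrix.diagonal fun i => ((p i : ℝ) : ℂ)) ⊗ₖ ρtil).submatrix
          fourTwoEquiv.symm fourTwoEquiv.symm := by
  intro ρtil
  have hσx' : ∀ i j, σx i j = if j ≠ i then 1 else 0 := by
    intro i j; fin_cases i <;> fin_cases j <;> simp [hσx]
  have hA : W * ρtil * Wᴴ = Matrix.of (fun a b =>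
      if a = 0 ∧ b = 0 then ρtil 0 0 else if a = 0 ∧ b = 7 then ρtil 0 1
      else if a = 7 ∧ b = 0 then ρtil 1 0 else if a = 7 ∧ b = 7 then ρtil 1 1 else 0) := by
    ext a b
    by_cases ha0 : a = 0 <;> by_cases ha7 : a = 7 <;> by_cases hb0 : b = 0 <;>
      by_cases hb7 : b = 7 <;>
      simp [hW, Matrix.mul_apply, Fin.sum_univ_two, Matrix.conjTranspose_apply,
        ha0, ha7, hb0, hb7]
  have hK0 : (((1 : Matrix (Fin 2) (Fin 2) ℂ) ⊗ₖ ((1 : Matrix (Fin 2) (Fin 2) ℂ) ⊗ₖ 1)).submatrix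
        qubit3Equiv.symm qubit3Equiv.symm) = permMat id := by
    ext a b
    simp only [Matrix.submatrix_apply, Matrix.kroneckerMap_apply, Matrix.one_apply,
      permMat, Matrix.of_apply, mul_ind]
    apply ind_congr; revert a b; decide
  have hK1 : ((σx ⊗ₖ ((1 : Matrix (Fin 2) (Fin 2) ℂ) ⊗ₖ 1)).submatrix
        qubit3Equiv.symm qubit3Equiv.symm) = permMat gB1 := by
    ext a b
    simp only [Matrix.submatrix_apply, Matrix.kroneckerMap_apply, Matrix.one_apply, hσx',
      permMat, Matrix.of_apply, mul_ind]
    apply ind_congr; revert a b; decide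
  have hK2 : (((1 : Matrix (Fin 2) (Fin 2) ℂ) ⊗ₖ (σx ⊗ₖ 1)).submatrix
        qubit3Equiv.symm qubit3Equiv.symm) = permMat gB2 := by
    ext a b
    simp only [Matrix.submatrix_apply, Matrix.kroneckerMap_apply, Matrix.one_apply, hσx',
      permMat, Matrix.of_apply, mul_ind]
    apply ind_congr; revert a b; decide
  have hK3 : (((1 : Matrix (Fin 2) (Fin 2) ℂ) ⊗ₖ ((1 : Matrix (Fin 2) (Fin 2) ℂ) ⊗ₖ σx)).submatrix
        qubit3Equiv.symm qubit3Equiv.symm) = permMat gB3 := by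
    ext a b
    simp only [Matrix.submatrix_apply, Matrix.kroneckerMap_apply, Matrix.one_apply, hσx',
      permMat, Matrix.of_apply, mul_ind]
    apply ind_congr; revert a b; decide
  have hRp : R = permMat tauP := by
    rw [hR, permMat_eq_sum, Fin.sum_univ_eight]
    rfl
  have htauPi : ∀ a i, i = tauP a ↔ a = piP i := by decide
  rw [Fin.sum_univ_four, hF0, hF1, hF2, hF3, hK0, hK1, hK2, hK3,
    smul_perm_conj _ (hp 0), smul_perm_conj _ (hp 1), smul_perm_conj _ (hp 2),
    smul_perm_conj _ (hp 3), hRp]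
  simp only [Matrix.mul_add, Matrix.add_mul, Matrix.mul_smul, Matrix.smul_mul,
    conj_permMat tauP piP htauPi]
  rw [hA]
  ext i k
  fin_cases i <;> fin_cases k <;>
    simp only [Matrix.submatrix_apply, Matrix.smul_apply, Matrix.add_apply,
      Matrix.kroneckerMap_apply, Matrix.of_apply, id_eq,
      piP_0, piP_1, piP_2, piP_3, piP_4, piP_5, piP_6, piP_7,
      gB1_0, gB1_1, gB1_2, gB1_3, gB1_4, gB1_5, gB1_6, gB1_7,
      gB2_0, gB2_1, gB2_2, gB2_3, gB2_4, gB2_5, gB2_6, gB2_7,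
      gB3_0, gB3_1, gB3_2, gB3_3, gB3_4, gB3_5, gB3_6, gB3_7,
      f2_0, f2_1, f2_2, f2_3, f2_4, f2_5, f2_6, f2_7,
      Matrix.diagonal_apply, Fin.reduceFinMk, Fin.isValue, Fin.reduceEq, reduceIte,
      and_self, and_true, true_and, and_false, false_and, smul_eq_mul, smul_zero,
      mul_zero, zero_mul, one_mul, mul_one, add_zero, zero_add]
end
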